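/- Let p : X̃ → X be a Γ-covering with X path-connected, and let μ : π₁(X,x) → Γ be a monodromy homomorphism with image Γ′. Then all connected components of X̃, with the restrictions of p, are isomorphic Γ′-coverings of X, and there is a bijection between the set of connected components of X̃ and the set of left cosets of Γ′ in Γ. -/

import Mathlib

/-!
STATEMENT 12: For a Γ-covering `p : X̃ → X` with `X` path-connected and monodromy image
`Γ′`, all connected components of `X̃` are isomorphic coverings of `X` (via the Γ-action),
each restriction of `p` is surjective onto `X`, and the connected components of `X̃` are in
bijection with the left cosets of `Γ′` in `Γ`.
-/

structure GammaCovering (Γ : Type*) [Group Γ] (Xt X : Type*)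
    [TopologicalSpace Xt] [TopologicalSpace X] [MulAction Γ Xt]
    [LocallyPathConnectedSpace X] where
  p : Xt → X
  continuous_p : Continuous p
  surjective_p : Function.Surjective p
  continuous_smul : ∀ g : Γ, Continuous fun z : Xt => g • z
  covering_action : ∀ z : Xt, ∃ V : Set Xt, IsOpen V ∧ z ∈ V ∧
      ∀ g : Γ, ((fun w : Xt => g • w) '' V ∩ V).Nonempty → g = 1
  quotient_p : Topology.IsQuotientMap p
  fiber_eq : ∀ a b : Xt, p a = p b ↔ ∃ g : Γ, g • a = b

noncomputable def loopClass {X : Type*} [TopologicalSpace X] {x : X} (γ : Path x x) :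
    FundamentalGroup X x :=
  FundamentalGroup.fromPath (⟦γ⟧ : Path.Homotopic.Quotient x x)

open Set Topology unitInterval

namespace GammaCovering

variable {Γ : Type*} [Group Γ] {Xt X : Type*}
    [TopologicalSpace Xt] [TopologicalSpace X] [MulAction Γ Xt]
    [LocallyPathConnectedSpace X]

variable (hc : GammaCovering Γ Xt X)
include hc

lemma p_smul (g : Γ) (z : Xt) : hc.p (g • z) = hc.p z :=
  (hc.fiber_eq _ _).mpr ⟨g⁻¹, inv_smul_smul g z⟩

lemma free {g : Γ} {z : Xt} (h : g • z = z) : g = 1 := by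
  obtain ⟨V, hVo, hzV, hV⟩ := hc.covering_action z
  exact hV g ⟨z, ⟨z, hzV, h⟩, hzV⟩

lemma isOpenMap_p : IsOpenMap hc.p := by
  intro U hU
  rw [← hc.quotient_p.isOpen_preimage]
  have h : hc.p ⁻¹' (hc.p '' U) = ⋃ g : Γ, (fun z : Xt => g • z) ⁻¹' U := by
    ext z
    simp only [mem_preimage, mem_image, mem_iUnion]
    constructor
    · rintro ⟨u, huU, hu⟩
      obtain ⟨g, hg⟩ := (hc.fiber_eq z u).mp hu.symm
      exact ⟨g, by simpa [hg] using huU⟩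
    · rintro ⟨g, hg⟩
      exact ⟨g • z, hg, hc.p_smul g z⟩
  rw [h]
  exact isOpen_iUnion fun g => hU.preimage (hc.continuous_smul g)

lemma smul_connectedComponent (g : Γ) (z : Xt) :
    (fun w : Xt => g • w) '' connectedComponent z = connectedComponent (g • z) := by
  apply Set.Subset.antisymm
  · exact (hc.continuous_smul g).image_connectedComponent_subset z
  · intro w hw
    have h2 := (hc.continuous_smul g⁻¹).image_connectedComponent_subset (g • z)
    rw [inv_smul_smul] at h2
    have h3 : g⁻¹ • w ∈ connectedComponent z := h2 ⟨w, hw, rfl⟩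
    exact ⟨g⁻¹ • w, h3, smul_inv_smul g w⟩

lemma image_component_eq_univ [PathConnectedSpace X] [LocallyPathConnectedSpace Xt] (z : Xt) :
    hc.p '' connectedComponent z = Set.univ := by
  set C := connectedComponent z with hC
  set T : Set Xt := {w | ∀ g : Γ, g • w ∉ C} with hT
  have hTopen : IsOpen T := by
    rw [isOpen_iff_forall_mem_open]
    intro w hw
    refine ⟨connectedComponent w, ?_, isOpen_connectedComponent, mem_connectedComponent⟩
    intro v hv g hgv
    have h1 : g • v ∈ connectedComponent (g • w) :=
      (hc.continuous_smul g).image_connectedComponent_subset w ⟨v, hv, rfl⟩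
    have h2 : connectedComponent (g • w) = connectedComponent (g • v) :=
      connectedComponent_eq h1
    have h3 : C = connectedComponent (g • v) := connectedComponent_eq hgv
    exact hw g (by rw [hC, ← hC, h3, ← h2]; exact mem_connectedComponent)
  have hcompl : (hc.p '' C)ᶜ = hc.p '' T := by
    ext y
    constructor
    · intro hy
      obtain ⟨w, rfl⟩ := hc.surjective_p y
      refine ⟨w, fun g hg => hy ⟨g • w, hg, hc.p_smul g w⟩, rfl⟩
    · rintro ⟨w, hwT, rfl⟩ ⟨u, huC, hu⟩
      obtain ⟨g, hg⟩ := (hc.fiber_eq w u).mp hu.symm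
      exact hwT g (hg ▸ huC)
  have hclopen : IsClopen (hc.p '' C) :=
    ⟨by rw [← isOpen_compl_iff, hcompl]; exact hc.isOpenMap_p T hTopen,
     hc.isOpenMap_p C isOpen_connectedComponent⟩
  exact hclopen.eq_univ ⟨hc.p z, z, mem_connectedComponent, rfl⟩

theorem exists_sec (z : Xt) :
    ∃ (U : Set X) (s : X → Xt), IsOpen U ∧ hc.p z ∈ U ∧
      ContinuousOn s U ∧ (∀ y ∈ U, hc.p (s y) = y) ∧ s (hc.p z) = z := by
  classical
  obtain ⟨V, hVo, hzV, hV⟩ := hc.covering_action z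
  have hinj : Set.InjOn hc.p V := by
    intro a ha b hb hab
    obtain ⟨g, hg⟩ := (hc.fiber_eq a b).mp hab
    have hg1 : g = 1 := hV g ⟨b, ⟨a, ha, hg⟩, hb⟩
    rw [hg1, one_smul] at hg; exact hg
  set U := hc.p '' V with hU
  set s : X → Xt := fun y => if h : y ∈ U then h.choose else z with hs
  have hsV : ∀ y ∈ U, s y ∈ V ∧ hc.p (s y) = y := by
    intro y hy
    simp only [hs, dif_pos hy]
    exact ⟨hy.choose_spec.1, hy.choose_spec.2⟩
  have huniq : ∀ w ∈ V, s (hc.p w) = w := by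
    intro w hw
    have h1 := hsV (hc.p w) ⟨w, hw, rfl⟩
    exact hinj h1.1 hw h1.2
  refine ⟨U, s, hc.isOpenMap_p V hVo, ⟨z, hzV, rfl⟩, ?_, fun y hy => (hsV y hy).2, huniq z hzV⟩
  rw [continuousOn_iff']
  intro t ht
  refine ⟨hc.p '' (V ∩ t), hc.isOpenMap_p _ (hVo.inter ht), ?_⟩
  ext y
  constructor
  · rintro ⟨hyt, hyU⟩
    obtain ⟨hsyV, hpsy⟩ := hsV y hyU
    exact ⟨⟨s y, ⟨hsyV, hyt⟩, hpsy⟩, hyU⟩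
  · rintro ⟨⟨w, ⟨hwV, hwt⟩, rfl⟩, hyU⟩
    refine ⟨?_, hyU⟩
    show s (hc.p w) ∈ t
    rw [huniq w hwV]; exact hwt

theorem lift_path {a b : X} (γ : Path a b) (z₀ : Xt) (hz₀ : hc.p z₀ = a) :
    ∃ (z₁ : Xt) (γt : Path z₀ z₁), ∀ t, hc.p (γt t) = γ t := by
  classical
  choose U s hUo hmem hcont hps _hsz using hc.exists_sec
  have hcover : (univ : Set I) ⊆ ⋃ z : Xt, γ ⁻¹' U z := by
    intro t _
    obtain ⟨z, hz⟩ := hc.surjective_p (γ t)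
    exact mem_iUnion.mpr ⟨z, by rw [mem_preimage, ← hz]; exact hmem z⟩
  obtain ⟨δ, hδ, hball⟩ := lebesgue_number_lemma_of_metric isCompact_univ
    (fun z => (hUo z).preimage γ.continuous) hcover
  obtain ⟨n, hn⟩ := exists_nat_one_div_lt hδ
  set N : ℕ := n + 1 with hN
  have hNpos : (0:ℝ) < N := by positivity
  have hn' : 1 / (N : ℝ) < δ := by
    rw [hN]; push_cast; exact hn
  have key : ∀ k : ℕ, k ≤ N → ∃ f : I → Xt, Continuous f ∧ f 0 = z₀ ∧
      ∀ t : I, (t : ℝ) ≤ (k : ℝ) / (N : ℝ) → hc.p (f t) = γ t := by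
    intro k
    induction k with
    | zero =>
      intro _
      refine ⟨fun _ => z₀, continuous_const, rfl, fun t ht => ?_⟩
      have h0 : (t : ℝ) = 0 := le_antisymm (by simpa using ht) t.2.1
      have ht0 : t = 0 := Subtype.ext h0
      rw [ht0, γ.source, hz₀]
    | succ k ih =>
      intro hk
      obtain ⟨f, hf, hf0, hfp⟩ := ih (Nat.le_of_succ_le hk)
      set A : ℝ := (k : ℝ) / N with hA
      set B : ℝ := ((k+1 : ℕ) : ℝ) / N with hB
      have hA0 : (0:ℝ) ≤ A := by positivity
      have hAB : A ≤ B := by rw [hA, hB]; gcongr; exact_mod_cast Nat.le_succ k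
      have hA1 : A ≤ 1 := (div_le_one hNpos).mpr (by exact_mod_cast Nat.le_of_succ_le hk)
      have hB1 : B ≤ 1 := (div_le_one hNpos).mpr (by exact_mod_cast hk)
      have hBA : B - A = 1 / N := by rw [hA, hB]; push_cast; ring
      set tA : I := ⟨A, hA0, hA1⟩ with htA
      obtain ⟨z, hz⟩ := hball tA (mem_univ _)
      have hsub : ∀ u : I, A ≤ (u:ℝ) → (u:ℝ) ≤ B → γ u ∈ U z := by
        intro u h1 h2
        refine hz ?_
        rw [Metric.mem_ball, Subtype.dist_eq, Real.dist_eq, abs_of_nonneg (by linarith)]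
        linarith
      have hpzA : hc.p (f tA) = γ tA := hfp tA (le_of_eq rfl)
      have hγA : γ tA ∈ U z := hsub tA (le_refl A) hAB
      obtain ⟨g, hg⟩ := (hc.fiber_eq (s z (γ tA)) (f tA)).mp (by rw [hps z _ hγA, hpzA])
      set c : I → I := fun t =>
        ⟨max A (min (t:ℝ) B), le_trans hA0 (le_max_left _ _),
          max_le hA1 (le_trans (min_le_right _ _) hB1)⟩ with hcdef
      have hccont : Continuous c :=
        Continuous.subtype_mk (continuous_const.max (continuous_subtype_val.min continuous_const)) _
      have hcmem : ∀ t, γ (c t) ∈ U z := fun t =>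
        hsub (c t) (le_max_left _ _) (max_le hAB (min_le_right _ _))
      set G : I → Xt := fun t => g • s z (γ (c t)) with hGdef
      have hG : Continuous G :=
        (hc.continuous_smul g).comp ((hcont z).comp_continuous (γ.continuous.comp hccont) hcmem)
      have hcA : c tA = tA := by
        apply Subtype.ext
        show max A (min A B) = A
        rw [min_eq_left hAB, max_self]
      have hagree : ∀ t : I, (t:ℝ) = A → f t = G t := by
        intro t ht
        have : t = tA := Subtype.ext ht
        subst this
        rw [hGdef]
        show f tA = g • s z (γ (c tA))
        rw [hcA, hg]
      refine ⟨fun t => if (t:ℝ) ≤ A then f t else G t,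
        Continuous.if_le hf hG continuous_subtype_val continuous_const hagree, ?_, ?_⟩
      · show (if ((0:I):ℝ) ≤ A then f 0 else G 0) = z₀
        rw [if_pos (by rw [Icc.coe_zero]; exact hA0)]
        exact hf0
      · intro t ht
        by_cases h : (t:ℝ) ≤ A
        · show hc.p (if (t:ℝ) ≤ A then f t else G t) = γ t
          rw [if_pos h]; exact hfp t h
        · have hAt : A ≤ (t:ℝ) := le_of_not_ge h
          have hct : c t = t := Subtype.ext (by
            show max A (min (t:ℝ) B) = t
            rw [min_eq_left ht, max_eq_right hAt])
          show hc.p (if (t:ℝ) ≤ A then f t else G t) = γ t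
          rw [if_neg h]
          show hc.p (g • s z (γ (c t))) = γ t
          rw [hct, hc.p_smul, hps z _ (hsub t hAt ht)]
  obtain ⟨f, hf, hf0, hfp⟩ := key N (le_refl N)
  have hfull : ∀ t : I, hc.p (f t) = γ t := fun t =>
    hfp t (by rw [div_self (ne_of_gt hNpos)]; exact t.2.2)
  exact ⟨f 1, ⟨⟨f, hf⟩, hf0, rfl⟩, hfull⟩

end GammaCovering

/-- Let `μ : π₁(X,x) → Γ` be a monodromy homomorphism of the
`Γ`-covering `p` (with base point `lam x` in the fibre over `x`), and `Γ′ = range μ`.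
Then the restriction of `p` to each connected component of `X̃` is surjective onto `X`,
any two connected components are related by the action of some `g ∈ Γ` (so the restricted
coverings are pairwise isomorphic `Γ′`-coverings), and the set of connected components of
`X̃` is in bijection with the left cosets `Γ ⧸ Γ′`. -/
theorem components_biject_with_cosets
    {Γ : Type*} [Group Γ] {Xt X : Type*}
    [TopologicalSpace Xt] [TopologicalSpace X] [MulAction Γ Xt]
    [LocallyPathConnectedSpace X] [LocallyPathConnectedSpace Xt] [PathConnectedSpace X]
    (hc : GammaCovering Γ Xt X) (x : X) (lam : X → Xt) (hlam : ∀ y, hc.p (lam y) = y)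
    (μ : FundamentalGroup X x →* Γ)
    (hμ : ∀ (γ : Path x x) (z : Xt) (γt : Path (lam x) z),
        (∀ t, hc.p (γt t) = γ t) → μ (loopClass γ) • z = lam x) :
    (∀ c : ConnectedComponents Xt, hc.p '' (ConnectedComponents.mk ⁻¹' {c}) = Set.univ) ∧
    (∀ c₁ c₂ : ConnectedComponents Xt, ∃ g : Γ,
        (fun z : Xt => g • z) '' (ConnectedComponents.mk ⁻¹' {c₁}) =
          ConnectedComponents.mk ⁻¹' {c₂}) ∧
    Nonempty (ConnectedComponents Xt ≃ (Γ ⧸ μ.range)) := by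
  classical
  have part1 : ∀ c : ConnectedComponents Xt,
      hc.p '' (ConnectedComponents.mk ⁻¹' {c}) = Set.univ := by
    intro c
    obtain ⟨z, rfl⟩ := ConnectedComponents.surjective_coe c
    rw [connectedComponents_preimage_singleton]
    exact hc.image_component_eq_univ z
  have part2 : ∀ c₁ c₂ : ConnectedComponents Xt, ∃ g : Γ,
      (fun z : Xt => g • z) '' (ConnectedComponents.mk ⁻¹' {c₁}) =
        ConnectedComponents.mk ⁻¹' {c₂} := by
    intro c₁ c₂
    obtain ⟨z₁, rfl⟩ := ConnectedComponents.surjective_coe c₁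
    obtain ⟨z₂, rfl⟩ := ConnectedComponents.surjective_coe c₂
    rw [connectedComponents_preimage_singleton, connectedComponents_preimage_singleton]
    have h1 : hc.p z₂ ∈ hc.p '' connectedComponent z₁ := by
      rw [hc.image_component_eq_univ]; trivial
    obtain ⟨w, hw, hpw⟩ := h1
    obtain ⟨g, hg⟩ := (hc.fiber_eq w z₂).mp hpw
    refine ⟨g, ?_⟩
    rw [connectedComponent_eq hw, hc.smul_connectedComponent, hg]
  -- every element of the monodromy image moves `lam x` within its connected component
  have hreal : ∀ q : FundamentalGroup X x, (μ q) • lam x ∈ connectedComponent (lam x) := by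
    intro q
    obtain ⟨γ, hγ⟩ := Quotient.exists_rep (FundamentalGroup.toPath q : Path.Homotopic.Quotient x x)
    have hq : loopClass γ = q := hγ
    obtain ⟨z, γt, hγt⟩ := hc.lift_path γ (lam x) (hlam x)
    have h1 : μ (loopClass γ) • z = lam x := hμ γ z γt hγt
    have hz : z ∈ connectedComponent (lam x) := by
      rw [← pathComponent_eq_connectedComponent]
      exact ⟨γt⟩
    have h2 : lam x ∈ connectedComponent ((μ q) • lam x) := by
      rw [← hc.smul_connectedComponent (μ q) (lam x)]
      exact ⟨z, hz, by rw [← hq]; exact h1⟩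
    rw [← connectedComponent_eq h2]
    exact mem_connectedComponent
  -- the map from cosets to connected components
  have hwd : ∀ g g' : Γ, g⁻¹ * g' ∈ μ.range →
      (ConnectedComponents.mk (g • lam x)) = ConnectedComponents.mk (g' • lam x) := by
    intro g g' hgg'
    obtain ⟨q, hq⟩ := MonoidHom.mem_range.mp hgg'
    have hg' : g' = g * μ q := by rw [hq]; group
    have h1 : g' • lam x ∈ connectedComponent (g • lam x) := by
      rw [hg', mul_smul, ← hc.smul_connectedComponent g (lam x)]
      exact ⟨μ q • lam x, hreal q, rfl⟩
    exact (ConnectedComponents.coe_eq_coe'.mpr h1).symm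
  let φ : Γ ⧸ μ.range → ConnectedComponents Xt :=
    Quotient.lift (fun g : Γ => ConnectedComponents.mk (g • lam x))
      (fun g g' h => hwd g g' (QuotientGroup.leftRel_apply.mp h))
  have hinj : Function.Injective φ := by
    intro q₁ q₂
    refine Quotient.inductionOn₂ q₁ q₂ ?_
    intro g g' hmk
    have hmem : g • lam x ∈ connectedComponent (g' • lam x) :=
      ConnectedComponents.coe_eq_coe'.mp hmk
    set h : Γ := g'⁻¹ * g with hh
    have hmem2 : h • lam x ∈ connectedComponent (lam x) := by
      have himg := (hc.continuous_smul g'⁻¹).image_connectedComponent_subset (g' • lam x)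
      rw [inv_smul_smul] at himg
      have hmem' : g'⁻¹ • (g • lam x) ∈ connectedComponent (lam x) :=
        himg ⟨g • lam x, hmem, rfl⟩
      rw [hh, mul_smul]
      exact hmem'
    have hjoined : Joined (lam x) (h • lam x) := by
      have := hmem2
      rw [← pathComponent_eq_connectedComponent] at this
      exact this
    obtain ⟨δ⟩ := hjoined
    have hx1 : x = hc.p (lam x) := (hlam x).symm
    have hx2 : x = hc.p (h • lam x) := by rw [hc.p_smul, hlam]
    set γ : Path x x := (δ.map hc.continuous_p).cast hx1 hx2 with hγ
    have hlift : ∀ t, hc.p (δ t) = γ t := fun t => rfl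
    have h1 : μ (loopClass γ) • (h • lam x) = lam x := hμ γ (h • lam x) δ hlift
    rw [← mul_smul] at h1
    have h2 : μ (loopClass γ) * h = 1 := hc.free h1
    have h3 : g'⁻¹ * g ∈ μ.range := by
      have hhi : h = (μ (loopClass γ))⁻¹ := eq_inv_of_mul_eq_one_right h2
      rw [← hh, hhi]
      exact inv_mem ⟨loopClass γ, rfl⟩
    exact (Quotient.sound (QuotientGroup.leftRel_apply.mpr h3)).symm
  have hsurj : Function.Surjective φ := by
    intro c
    have h1 : x ∈ hc.p '' (ConnectedComponents.mk ⁻¹' {c}) := by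
      rw [part1 c]; trivial
    obtain ⟨w, hw, hpw⟩ := h1
    obtain ⟨g, hg⟩ := (hc.fiber_eq (lam x) w).mp (by rw [hlam, hpw])
    refine ⟨QuotientGroup.mk g, ?_⟩
    show ConnectedComponents.mk (g • lam x) = c
    rw [hg]
    exact hw
  exact ⟨part1, part2, ⟨(Equiv.ofBijective φ ⟨hinj, hsurj⟩).symm⟩⟩
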